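/- Let γ ∈ H and let i, j ∈ ℕ₀. Then γ(x, y) ∈ 𝔭^{i+j−(p−2)} for all x ∈ 𝔭^i and y ∈ 𝔭^j (where 𝔭^k = O for k ≤ 0). -/

import Mathlib

set_option synthInstance.maxHeartbeats 1000000
set_option maxHeartbeats 1000000

namespace MaximalClassFrame

variable (p : ℕ) [Fact p.Prime]
variable (K : Type) [Field K] [Algebra ℚ_[p] K] [Algebra ℤ_[p] K]
  [IsScalarTower ℤ_[p] ℚ_[p] K]

/-- The maximal order `𝒪` of `K`: the integral closure of `ℤ_p` in `K`. -/
noncomputable abbrev 𝒪 : Subalgebra ℤ_[p] K := integralClosure ℤ_[p] K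

variable (θ : 𝒪 p K)

/-- The maximal ideal `𝔭` of `𝒪`, generated by `κ = θ - 1`. -/
noncomputable def pid : Ideal (𝒪 p K) := Ideal.span {θ - 1}

/-- A `ℤ_p`-bilinear map `γ : 𝒪 × 𝒪 → 𝒪` is `P`-equivariant if it is
alternating and satisfies `γ(θx, θy) = θ·γ(x,y)` for all `x, y`. -/
def IsPEquivariant (γ : 𝒪 p K →ₗ[ℤ_[p]] 𝒪 p K →ₗ[ℤ_[p]] 𝒪 p K) : Prop :=
  (∀ x, γ x x = 0) ∧ ∀ x y, γ (θ * x) (θ * y) = θ * γ x y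

/-- `γ ∈ Ĥ_i`: the additive subgroup of `𝒪` generated by
`{γ(x,y) : x, y ∈ 𝔭^i}` equals `𝔭^(2i+1)`. -/
def InHhat (i : ℕ) (γ : 𝒪 p K →ₗ[ℤ_[p]] 𝒪 p K →ₗ[ℤ_[p]] 𝒪 p K) : Prop :=
  Submodule.span ℤ (Set.image2 (fun x y => γ x y)
      ((pid p K θ ^ i : Ideal (𝒪 p K)) : Set (𝒪 p K))
      ((pid p K θ ^ i : Ideal (𝒪 p K)) : Set (𝒪 p K)))
    = (pid p K θ ^ (2 * i + 1)).restrictScalars ℤ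

/-- `𝔭^k` for an integer `k`, with the convention `𝔭^k = 𝒪` for `k ≤ 0`. -/
noncomputable def pidz (k : ℤ) : Ideal (𝒪 p K) := pid p K θ ^ k.toNat

/-- Abstract key lemma: in a domain `R`, if `κ ≠ 0`, `κ^(p-1)` and `p` divide
each other, and `γ` is a biadditive-type map satisfying the displayed
`p`-linearity and the `κ`-relation, then `γ` maps `(κ^i) × (κ^j)` into
`(κ^{i+j-(p-2)})`. -/
theorem aux_main {R : Type*} [CommRing R] [IsDomain R] (p : ℕ) (hp : 5 ≤ p)
    (κ : R) (hκ : κ ≠ 0) (hd1 : κ ^ (p - 1) ∣ (p : R)) (hd2 : (p : R) ∣ κ ^ (p - 1))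
    (γ : R → R → R)
    (hpl : ∀ x y, γ ((p : R) * x) y = (p : R) * γ x y)
    (hpr : ∀ x y, γ x ((p : R) * y) = (p : R) * γ x y)
    (hrel : ∀ x y, κ * γ x y = γ (κ * x) y + γ x (κ * y) + γ (κ * x) (κ * y)) :
    ∀ (i j : ℕ) (x y : R), κ ^ i ∣ x → κ ^ j ∣ y →
      κ ^ (((i : ℤ) + (j : ℤ) - ((p : ℤ) - 2)).toNat) ∣ γ x y := by
  obtain ⟨v, hv⟩ := hd2
  have box : ∀ m i j, i ≤ p - 1 → j ≤ p - 1 → i + j + m = 2 * (p - 1) →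
      ∀ x y, κ ^ i ∣ x → κ ^ j ∣ y →
      κ ^ (((i : ℤ) + (j : ℤ) - ((p : ℤ) - 2)).toNat) ∣ γ x y := by
    intro m
    induction m using Nat.strong_induction_on with
    | _ m IH =>
      intro i j hi hj hm x y hx hy
      by_cases htriv : i + j ≤ p - 2
      · have h0 : (((i : ℤ) + (j : ℤ) - ((p : ℤ) - 2)).toNat) = 0 := by omega
        simp [h0]
      · by_cases hip : i = p - 1
        · obtain ⟨t, rfl⟩ := hx
          by_cases hjp : j = p - 1
          · obtain ⟨s, rfl⟩ := hy
            have hxe : κ ^ i * t = (p : R) * (v * t) := by rw [hip, hv]; ring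
            have hye : κ ^ j * s = (p : R) * (v * s) := by rw [hjp, hv]; ring
            have hg : γ (κ ^ i * t) (κ ^ j * s) = ((p : R) * (p : R)) * γ (v * t) (v * s) := by
              rw [hxe, hye, hpl, hpr]; ring
            have hdd : κ ^ ((p - 1) + (p - 1)) ∣ ((p : R) * (p : R)) := by
              rw [pow_add]; exact mul_dvd_mul hd1 hd1
            calc κ ^ (((i : ℤ) + (j : ℤ) - ((p : ℤ) - 2)).toNat)
                ∣ κ ^ ((p - 1) + (p - 1)) := pow_dvd_pow κ (by omega)
              _ ∣ (p : R) * (p : R) := hdd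
              _ ∣ γ (κ ^ i * t) (κ ^ j * s) := by rw [hg]; exact Dvd.intro _ rfl
          · have hxe : κ ^ i * t = (p : R) * (v * t) := by rw [hip, hv]; ring
            calc κ ^ (((i : ℤ) + (j : ℤ) - ((p : ℤ) - 2)).toNat)
                ∣ κ ^ (p - 1) := pow_dvd_pow κ (by omega)
              _ ∣ (p : R) := hd1
              _ ∣ γ (κ ^ i * t) y := by rw [hxe, hpl]; exact Dvd.intro _ rfl
        · by_cases hjp : j = p - 1
          · obtain ⟨s, rfl⟩ := hy
            have hye : κ ^ j * s = (p : R) * (v * s) := by rw [hjp, hv]; ring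
            calc κ ^ (((i : ℤ) + (j : ℤ) - ((p : ℤ) - 2)).toNat)
                ∣ κ ^ (p - 1) := pow_dvd_pow κ (by omega)
              _ ∣ (p : R) := hd1
              _ ∣ γ x (κ ^ j * s) := by rw [hye, hpr]; exact Dvd.intro _ rfl
          · -- here i, j ≤ p - 2 and i + j ≥ p - 1, so m ≥ 2
            obtain ⟨t, rfl⟩ := hx
            obtain ⟨s, rfl⟩ := hy
            set T : ℕ := (((i : ℤ) + (j : ℤ) - ((p : ℤ) - 2)).toNat) with hT
            have h1 := IH (m - 1) (by omega) (i + 1) j (by omega) (by omega) (by omega)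
              (κ * (κ ^ i * t)) (κ ^ j * s) ⟨t, by ring⟩ ⟨s, rfl⟩
            have h2 := IH (m - 1) (by omega) i (j + 1) (by omega) (by omega) (by omega)
              (κ ^ i * t) (κ * (κ ^ j * s)) ⟨t, rfl⟩ ⟨s, by ring⟩
            have h3 := IH (m - 2) (by omega) (i + 1) (j + 1) (by omega) (by omega) (by omega)
              (κ * (κ ^ i * t)) (κ * (κ ^ j * s)) ⟨t, by ring⟩ ⟨s, by ring⟩
            have e1 : ((((i + 1 : ℕ)) : ℤ) + (j : ℤ) - ((p : ℤ) - 2)).toNat = T + 1 := by omega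
            have e2 : (((i : ℤ)) + (((j + 1 : ℕ)) : ℤ) - ((p : ℤ) - 2)).toNat = T + 1 := by omega
            have e3 : ((((i + 1 : ℕ)) : ℤ) + (((j + 1 : ℕ)) : ℤ) - ((p : ℤ) - 2)).toNat
                = T + 2 := by omega
            rw [e1] at h1; rw [e2] at h2; rw [e3] at h3
            have hsum : κ ^ (T + 1) ∣ κ * γ (κ ^ i * t) (κ ^ j * s) := by
              rw [hrel]
              exact dvd_add (dvd_add h1 h2)
                (dvd_trans (pow_dvd_pow κ (by omega)) h3)
            obtain ⟨c, hc⟩ := hsum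
            refine ⟨c, ?_⟩
            have hcc : κ * γ (κ ^ i * t) (κ ^ j * s) = κ * (κ ^ T * c) := by
              rw [hc, pow_succ']; ring
            exact mul_left_cancel₀ hκ hcc
  suffices H : ∀ (n i j : ℕ), i + j = n → ∀ x y, κ ^ i ∣ x → κ ^ j ∣ y →
      κ ^ (((i : ℤ) + (j : ℤ) - ((p : ℤ) - 2)).toNat) ∣ γ x y by
    intro i j x y hx hy; exact H (i + j) i j rfl x y hx hy
  intro n
  induction n using Nat.strong_induction_on with
  | _ n IH =>
    intro i j hn x y hx hy
    by_cases hi : p - 1 < i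
    · obtain ⟨t, rfl⟩ := hx
      have hxe : κ ^ i * t = (p : R) * (v * (κ ^ (i - (p - 1)) * t)) := by
        have hsplit : κ ^ i = κ ^ (p - 1) * κ ^ (i - (p - 1)) := by
          rw [← pow_add]; congr 1; omega
        rw [hsplit, hv]; ring
      have h1 := IH ((i - (p - 1)) + j) (by omega) (i - (p - 1)) j rfl
        (v * (κ ^ (i - (p - 1)) * t)) y ⟨v * t, by ring⟩ hy
      calc κ ^ (((i : ℤ) + (j : ℤ) - ((p : ℤ) - 2)).toNat)
          ∣ κ ^ ((p - 1) + ((((i - (p - 1) : ℕ) : ℤ) + (j : ℤ) - ((p : ℤ) - 2)).toNat)) :=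
            pow_dvd_pow κ (by omega)
        _ ∣ (p : R) * γ (v * (κ ^ (i - (p - 1)) * t)) y := by
            rw [pow_add]; exact mul_dvd_mul hd1 h1
        _ = γ (κ ^ i * t) y := by rw [hxe, hpl]
    · by_cases hj : p - 1 < j
      · obtain ⟨s, rfl⟩ := hy
        have hye : κ ^ j * s = (p : R) * (v * (κ ^ (j - (p - 1)) * s)) := by
          have hsplit : κ ^ j = κ ^ (p - 1) * κ ^ (j - (p - 1)) := by
            rw [← pow_add]; congr 1; omega
          rw [hsplit, hv]; ring
        have h1 := IH (i + (j - (p - 1))) (by omega) i (j - (p - 1)) rfl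
          x (v * (κ ^ (j - (p - 1)) * s)) hx ⟨v * s, by ring⟩
        calc κ ^ (((i : ℤ) + (j : ℤ) - ((p : ℤ) - 2)).toNat)
            ∣ κ ^ ((p - 1) + (((i : ℤ) + ((j - (p - 1) : ℕ) : ℤ) - ((p : ℤ) - 2)).toNat)) :=
              pow_dvd_pow κ (by omega)
          _ ∣ (p : R) * γ x (v * (κ ^ (j - (p - 1)) * s)) := by
              rw [pow_add]; exact mul_dvd_mul hd1 h1
          _ = γ x (κ ^ j * s) := by rw [hye, hpr]
      · exact box (2 * (p - 1) - (i + j)) i j (by omega) (by omega) (by omega) x y hx hy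

open Polynomial Finset in
/-- `(θ - 1)^(p-1)` and `p` divide each other in `𝒪`. -/
theorem kappa_pow_associated (hp : 5 ≤ p) (hθ : IsPrimitiveRoot (θ : K) p) :
    (θ - 1) ^ (p - 1) ∣ ((p : ℕ) : 𝒪 p K) ∧ ((p : ℕ) : 𝒪 p K) ∣ (θ - 1) ^ (p - 1) := by
  classical
  have hpos : 0 < p := by omega
  have hθp : θ ^ p = 1 := by
    apply Subtype.ext; push_cast; exact hθ.pow_eq_one
  have hθ1 : θ ≠ 1 := fun h => hθ.ne_one (by omega) (by simp [h])
  have hκ : θ - 1 ≠ 0 := sub_ne_zero.mpr hθ1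
  have hdvd1 : ∀ m : ℕ, (θ - 1) ∣ (θ ^ m - 1) := fun m =>
    Dvd.intro_left _ (geom_sum_mul θ m)
  have hdvd2 : ∀ m : ℕ, 1 ≤ m → m ≤ p - 1 → (θ ^ m - 1) ∣ (θ - 1) := by
    intro m h1 h2
    have hcop : Nat.Coprime p m := (Nat.Prime.coprime_iff_not_dvd Fact.out).mpr
      (fun h => by have := Nat.le_of_dvd (by omega) h; omega)
    obtain ⟨m', hm'⟩ := (Nat.exists_mul_mod_eq_one_of_coprime hcop.symm (by omega)).imp fun _ h => h.2
    have key : (θ ^ m) ^ m' = θ := by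
      rw [← pow_mul]
      have hmm : m * m' = p * (m * m' / p) + 1 := by
        conv_lhs => rw [← Nat.div_add_mod (m * m') p]
        rw [hm']
      rw [hmm, pow_add, pow_mul, hθp, one_pow, pow_one, one_mul]
    have hg := geom_sum_mul (θ ^ m) m'
    rw [key] at hg
    exact Dvd.intro_left _ hg
  have hassoc : ∀ m : ℕ, 1 ≤ m → m ≤ p - 1 → Associated (θ - 1) (1 - θ ^ m) := by
    intro m h1 h2
    have ha : Associated (θ - 1) (θ ^ m - 1) :=
      associated_of_dvd_dvd (hdvd1 m) (hdvd2 m h1 h2)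
    exact ha.trans (associated_of_dvd_dvd ⟨-1, by ring⟩ ⟨-1, by ring⟩)
  have hinj : Set.InjOn (fun k => (θ : K) ^ (k + 1)) (range (p - 1)) := by
    intro a ha b hb hab
    simp only [coe_range, Set.mem_Iio] at ha hb
    have := hθ.pow_inj (i := a + 1) (j := b + 1) (by omega) (by omega) hab
    omega
  have hprodK : ((p : ℕ) : K) = ∏ k ∈ range (p - 1), (1 - (θ : K) ^ (k + 1)) := by
    have h1 : eval 1 (cyclotomic p K) = ((p : ℕ) : K) := eval_one_cyclotomic_prime
    have h2 : cyclotomic p K = ∏ μ ∈ primitiveRoots p K, (X - C μ) :=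
      cyclotomic_eq_prod_X_sub_primitiveRoots hθ
    have himg : primitiveRoots p K =
        Finset.image (fun k => (θ : K) ^ (k + 1)) (range (p - 1)) := by
      symm
      apply Finset.eq_of_subset_of_card_le
      · intro μ hμ
        simp only [Finset.mem_image, mem_range] at hμ
        obtain ⟨k, hk, rfl⟩ := hμ
        rw [mem_primitiveRoots hpos]
        exact hθ.pow_of_coprime (k + 1)
          (Nat.Coprime.symm ((Nat.Prime.coprime_iff_not_dvd Fact.out).mpr
            (fun h => by have := Nat.le_of_dvd (by omega) h; omega)))
      · rw [hθ.card_primitiveRoots, Nat.totient_prime Fact.out,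
          Finset.card_image_of_injOn hinj, Finset.card_range]
    rw [h2, himg] at h1
    rw [Finset.prod_image hinj] at h1
    rw [← h1]
    simp [eval_prod]
  have hprodO : ∏ k ∈ range (p - 1), (1 - θ ^ (k + 1)) = ((p : ℕ) : 𝒪 p K) := by
    apply Subtype.ext
    push_cast
    rw [← hprodK]
  have hassocP : Associated ((θ - 1) ^ (p - 1)) ((p : ℕ) : 𝒪 p K) := by
    have h := Associated.prod (range (p - 1)) (fun _ => θ - 1) (fun k => 1 - θ ^ (k + 1))
      (fun k hk => hassoc (k + 1) (by omega) (by simp only [mem_range] at hk; omega))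
    rw [Finset.prod_const, Finset.card_range, hprodO] at h
    exact h
  exact ⟨hassocP.dvd, hassocP.symm.dvd⟩

/-- For `γ ∈ H` and `i, j ∈ ℕ₀`,
`γ(x, y) ∈ 𝔭^{i+j−(p−2)}` for all `x ∈ 𝔭^i`, `y ∈ 𝔭^j`. -/
theorem frame_gamma_images (hp : 5 ≤ p) (hθ : IsPrimitiveRoot (θ : K) p)
    (hgen : Algebra.adjoin ℚ_[p] {(θ : K)} = ⊤)
    (γ : 𝒪 p K →ₗ[ℤ_[p]] 𝒪 p K →ₗ[ℤ_[p]] 𝒪 p K) (hγ : IsPEquivariant p K θ γ)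
    (i j : ℕ) :
    ∀ x ∈ pid p K θ ^ i, ∀ y ∈ pid p K θ ^ j,
      γ x y ∈ pidz p K θ ((i : ℤ) + (j : ℤ) - ((p : ℤ) - 2)) := by
  obtain ⟨hd1, hd2⟩ := kappa_pow_associated p K θ hp hθ
  have hθ1 : θ ≠ 1 := fun h => hθ.ne_one (by omega) (by simp [h])
  have hκ : θ - 1 ≠ 0 := sub_ne_zero.mpr hθ1
  have hpl : ∀ x y, γ (((p : ℕ) : 𝒪 p K) * x) y = ((p : ℕ) : 𝒪 p K) * γ x y := by
    intro x y
    rw [← nsmul_eq_mul, map_nsmul, LinearMap.smul_apply, nsmul_eq_mul]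
  have hpr : ∀ x y, γ x (((p : ℕ) : 𝒪 p K) * y) = ((p : ℕ) : 𝒪 p K) * γ x y := by
    intro x y
    rw [← nsmul_eq_mul, map_nsmul, nsmul_eq_mul]
  have hrel : ∀ x y, (θ - 1) * γ x y =
      γ ((θ - 1) * x) y + γ x ((θ - 1) * y) + γ ((θ - 1) * x) ((θ - 1) * y) := by
    intro x y
    have h := hγ.2 x y
    have ex : θ * x = x + (θ - 1) * x := by ring
    have ey : θ * y = y + (θ - 1) * y := by ring
    simp only [ex, ey, map_add, LinearMap.add_apply] at h
    linear_combination -h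
  intro x hx y hy
  rw [pid, Ideal.span_singleton_pow, Ideal.mem_span_singleton] at hx hy
  rw [pidz, pid, Ideal.span_singleton_pow, Ideal.mem_span_singleton]
  exact aux_main p hp (θ - 1) hκ hd1 hd2 (fun a b => γ a b) hpl hpr hrel i j x y hx hy

end MaximalClassFrame
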